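/- For a fixed derangement δ of [n] with n ≥ 2, the sum over all derangements d of [n] of the number of positions i with d(i) = δ(i) equals (n/(n-1))·D_n, where D_n is the number of derangements of [n]. Equivalently, (n-1)·Σ_{d ∈ D_n} |{i : d(i) = δ(i)}| = n·D_n. -/

import Mathlib

open Finset Equiv

lemma class_card_eq (n : ℕ) (i j j' : Fin n) (hj : j ≠ i) (hj' : j' ≠ i) :
    ((Finset.univ.filter (fun d : Equiv.Perm (Fin n) => ∀ k, d k ≠ k)).filter
      (fun d => d i = j)).card
    = ((Finset.univ.filter (fun d : Equiv.Perm (Fin n) => ∀ k, d k ≠ k)).filter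
      (fun d => d i = j')).card := by
  apply Finset.card_bij' (fun d _ => (swap j j') * d * (swap j j'))
    (fun d _ => (swap j j') * d * (swap j j'))
  · intro d hd
    simp only [Finset.mem_filter, Finset.mem_univ, true_and] at hd ⊢
    obtain ⟨hder, hdi⟩ := hd
    constructor
    · intro k hk
      simp only [Perm.mul_apply] at hk
      have h2 : d (swap j j' k) = swap j j' k := by
        have := congrArg (swap j j') hk
        simpa using this
      exact hder _ h2
    · simp [Perm.mul_apply, swap_apply_of_ne_of_ne (hj.symm) (hj'.symm), hdi]
  · intro d hd
    simp only [Finset.mem_filter, Finset.mem_univ, true_and] at hd ⊢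
    obtain ⟨hder, hdi⟩ := hd
    constructor
    · intro k hk
      simp only [Perm.mul_apply] at hk
      have h2 : d (swap j j' k) = swap j j' k := by
        have := congrArg (swap j j') hk
        simpa using this
      exact hder _ h2
    · simp [Perm.mul_apply, swap_apply_of_ne_of_ne (hj.symm) (hj'.symm), hdi, swap_apply_right]
  · intro d _
    ext k
    simp [Perm.mul_apply]
  · intro d _
    ext k
    simp [Perm.mul_apply]

theorem stmt1 (n : ℕ) (hn : 2 ≤ n) (δ : Equiv.Perm (Fin n)) (hδ : ∀ i, δ i ≠ i) :
    (n - 1) * ∑ d ∈ Finset.univ.filter (fun d : Equiv.Perm (Fin n) => ∀ i, d i ≠ i),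
      (Finset.univ.filter (fun i : Fin n => d i = δ i)).card
    = n * numDerangements n := by
  set D := Finset.univ.filter (fun d : Equiv.Perm (Fin n) => ∀ i, d i ≠ i) with hD
  have hDcard : D.card = numDerangements n := by
    rw [← card_derangements_fin_eq_numDerangements]
    rw [hD]
    rw [Fintype.card_eq_nat_card, Nat.card_eq_card_toFinset]
    congr 1
    ext d
    simp [derangements]
    exact (@Set.mem_toFinset _ _ instFintypeElemPermDerangements d).symm
  -- swap sums
  have hswap : ∑ d ∈ D, (Finset.univ.filter (fun i : Fin n => d i = δ i)).card
      = ∑ i : Fin n, (D.filter (fun d => d i = δ i)).card := by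
    simp_rw [Finset.card_filter]
    exact Finset.sum_comm
  rw [hswap, Finset.mul_sum]
  -- each term: (n-1) * class = D.card
  have key : ∀ i : Fin n, (n - 1) * (D.filter (fun d => d i = δ i)).card = D.card := by
    intro i
    have hpart : D.card = ∑ j ∈ Finset.univ.erase i, (D.filter (fun d => d i = j)).card := by
      apply Finset.card_eq_sum_card_fiberwise
      intro d hd
      simp only [hD, Finset.mem_coe, Finset.mem_filter, Finset.mem_univ, true_and] at hd
      exact Finset.mem_erase.mpr ⟨hd i, Finset.mem_univ _⟩
    have hall : ∀ j ∈ Finset.univ.erase i, (D.filter (fun d => d i = j)).card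
        = (D.filter (fun d => d i = δ i)).card := by
      intro j hj
      exact class_card_eq n i j (δ i) (Finset.mem_erase.mp hj).1 (hδ i)
    rw [hpart, Finset.sum_congr rfl hall, Finset.sum_const, smul_eq_mul]
    congr 1
    rw [Finset.card_erase_of_mem (Finset.mem_univ _)]
    simp
  calc ∑ i : Fin n, (n - 1) * (D.filter (fun d => d i = δ i)).card
      = ∑ _i : Fin n, D.card := Finset.sum_congr rfl (fun i _ => key i)
    _ = n * numDerangements n := by
        rw [Finset.sum_const, smul_eq_mul, hDcard]
        simp
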